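/- For every u ∈ ℝ, the log-periodic fluctuation P(u) = (2π/log 2) Σ_{k=1}^∞ sin(2πku)/sinh(2π²k/log 2) satisfies the uniform bound |P(u)| ≤ 7.8 × 10^{-12}; in particular, the complex poles on the imaginary axis contribute only a minute oscillation to the large-t expansion of the conductance. -/

import Mathlib

open Real Filter Topology

set_option maxHeartbeats 1000000 in
/-- The log-periodic fluctuation `P(u) = (2π/log 2) Σ_{k≥1} sin(2πku)/sinh(2π²k/log 2)`
arising from the complex poles `s_k = 2πik/log 2` satisfies the uniform bound
`|P(u)| ≤ 7.8 × 10⁻¹²`. -/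
theorem stmt15 (u : ℝ) :
    |(2 * π / Real.log 2) * ∑' k : ℕ,
        Real.sin (2 * π * ((k : ℝ) + 1) * u) /
          Real.sinh (2 * π ^ 2 * ((k : ℝ) + 1) / Real.log 2)| ≤ 7.8e-12 := by
  have hlog : (0.6931471803 : ℝ) < Real.log 2 := Real.log_two_gt_d9
  have hlog' : Real.log 2 < 0.6931471808 := Real.log_two_lt_d9
  have hπ : (3.14159265358979323846 : ℝ) < π := Real.pi_gt_d20
  have hπ' : π < 3.14159265358979323847 := Real.pi_lt_d20
  have hlogpos : (0 : ℝ) < Real.log 2 := by linarith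
  set a : ℝ := 2 * π ^ 2 / Real.log 2 with ha_def
  have ha : (28.47765 : ℝ) ≤ a := by
    rw [ha_def, le_div_iff₀ hlogpos]
    nlinarith
  have ha0 : 0 < a := lt_of_lt_of_le (by norm_num) ha
  have hsinh0 : 0 < Real.sinh a := Real.sinh_pos_iff.mpr ha0
  -- lower bound on exp a
  have hexp28 : (1.446256e12 : ℝ) ≤ Real.exp 28 := by
    have h1 : (2.7182818283 : ℝ) ^ 28 ≤ (Real.exp 1) ^ 28 :=
      pow_le_pow_left₀ (by norm_num) Real.exp_one_gt_d9.le 28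
    have h2 : Real.exp ((28 : ℕ) * (1 : ℝ)) = Real.exp 1 ^ (28 : ℕ) :=
      Real.exp_nat_mul 1 28
    have h3 : (1.446256e12 : ℝ) ≤ (2.7182818283 : ℝ) ^ 28 := by norm_num
    calc (1.446256e12 : ℝ) ≤ (Real.exp 1) ^ 28 := le_trans h3 h1
      _ = Real.exp 28 := by rw [← h2]; norm_num
  have hexpfrac : (1.61227 : ℝ) ≤ Real.exp 0.47765 := by
    have h := Real.sum_le_exp_of_nonneg (x := 0.47765) (by norm_num) 7
    refine le_trans ?_ h
    simp only [Finset.sum_range_succ, Finset.sum_range_zero]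
    norm_num [Nat.factorial]
  have hexpa : (2.33175e12 : ℝ) ≤ Real.exp a := by
    have h1 : Real.exp (28.47765 : ℝ) ≤ Real.exp a := Real.exp_le_exp.mpr ha
    have h2 : Real.exp (28.47765 : ℝ) = Real.exp 28 * Real.exp 0.47765 := by
      rw [← Real.exp_add]; norm_num
    nlinarith [Real.exp_pos (28 : ℝ), Real.exp_pos (0.47765 : ℝ)]
  have hexpna : Real.exp (-a) ≤ 4.3e-13 := by
    rw [Real.exp_neg]
    rw [inv_le_comm₀ (Real.exp_pos a) (by norm_num)]
    calc (4.3e-13 : ℝ)⁻¹ ≤ 2.33175e12 := by norm_num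
      _ ≤ Real.exp a := hexpa
  have hsinha : (1.16587e12 : ℝ) ≤ Real.sinh a := by
    rw [Real.sinh_eq]
    have : Real.exp (-a) ≤ 1 := by linarith
    linarith
  -- termwise bound
  set r : ℝ := Real.exp (-a) with hr_def
  have hr0 : 0 ≤ r := (Real.exp_pos _).le
  have hr1 : r < 1 := Real.exp_lt_one_iff.mpr (by linarith)
  set f : ℕ → ℝ := fun k => Real.sin (2 * π * ((k : ℝ) + 1) * u) /
      Real.sinh (2 * π ^ 2 * ((k : ℝ) + 1) / Real.log 2) with hf_def
  set g : ℕ → ℝ := fun k => (Real.sinh a)⁻¹ * r ^ k with hg_def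
  have hbound : ∀ k : ℕ, |f k| ≤ g k := by
    intro k
    have hk : 2 * π ^ 2 * ((k : ℝ) + 1) / Real.log 2 = a + a * k := by
      rw [ha_def]; ring
    have hak : (0 : ℝ) ≤ a * k := by positivity
    have hsinhk : 0 ≤ Real.sinh (a * k) := Real.sinh_nonneg_iff.mpr hak
    have hcs : Real.cosh a - Real.sinh a = Real.exp (-a) := Real.cosh_sub_sinh a
    have hge : Real.sinh a * Real.exp (a * k) ≤ Real.sinh (a + a * k) := by
      rw [Real.sinh_add, ← Real.cosh_add_sinh]
      nlinarith [Real.exp_pos (-a)]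
    have hpos : 0 < Real.sinh a * Real.exp (a * k) := by positivity
    have hpos2 : 0 < Real.sinh (a + a * k) := lt_of_lt_of_le hpos hge
    have h1 : |f k| ≤ (Real.sinh (a + a * k))⁻¹ := by
      rw [hf_def]
      simp only [hk]
      rw [abs_div, abs_of_pos hpos2, div_le_iff₀ hpos2]
      calc |Real.sin (2 * π * ((k : ℝ) + 1) * u)| ≤ 1 := Real.abs_sin_le_one _
        _ = (Real.sinh (a + a * k))⁻¹ * Real.sinh (a + a * k) := by
            field_simp
    refine le_trans h1 ?_
    rw [hg_def]
    have : (Real.sinh (a + a * k))⁻¹ ≤ (Real.sinh a * Real.exp (a * k))⁻¹ :=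
      inv_anti₀ hpos hge
    refine le_trans this (le_of_eq ?_)
    rw [mul_inv, hr_def]
    congr 1
    rw [← Real.exp_neg, ← Real.exp_nat_mul]
    congr 1
    ring
  have hg_sum : Summable g := by
    exact (summable_geometric_of_lt_one hr0 hr1).mul_left _
  have hfabs_sum : Summable fun k => |f k| :=
    Summable.of_nonneg_of_le (fun k => abs_nonneg _) hbound hg_sum
  have hf_sum : Summable f := hfabs_sum.of_abs
  have htsum_g : ∑' k, g k = (Real.sinh a)⁻¹ * (1 - r)⁻¹ := by
    rw [hg_def, tsum_mul_left, tsum_geometric_of_lt_one hr0 hr1]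
  have habs : |∑' k, f k| ≤ (Real.sinh a)⁻¹ * (1 - r)⁻¹ := by
    calc |∑' k, f k| ≤ ∑' k, |f k| := by
          have h := norm_tsum_le_tsum_norm (f := f)
            (by simpa only [Real.norm_eq_abs] using hfabs_sum)
          simpa only [Real.norm_eq_abs] using h
      _ ≤ ∑' k, g k := Summable.tsum_le_tsum hbound hfabs_sum hg_sum
      _ = (Real.sinh a)⁻¹ * (1 - r)⁻¹ := htsum_g
  -- final numeric bound
  have hc : 2 * π / Real.log 2 ≤ 9.06473 := by
    rw [div_le_iff₀ hlogpos]; nlinarith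
  have hcpos : 0 < 2 * π / Real.log 2 := by positivity
  have h2 : (Real.sinh a)⁻¹ ≤ (1.16587e12 : ℝ)⁻¹ :=
    inv_anti₀ (by norm_num) hsinha
  have h3 : (1 - r)⁻¹ ≤ (1 - 4.3e-13 : ℝ)⁻¹ := by
    apply inv_anti₀ (by norm_num)
    linarith
  rw [abs_mul, abs_of_pos hcpos]
  calc (2 * π / Real.log 2) * |∑' k, f k|
      ≤ 9.06473 * ((Real.sinh a)⁻¹ * (1 - r)⁻¹) := by
        apply mul_le_mul hc habs (abs_nonneg _) (by norm_num)
    _ ≤ 9.06473 * ((1.16587e12 : ℝ)⁻¹ * (1 - 4.3e-13 : ℝ)⁻¹) := by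
        apply mul_le_mul_of_nonneg_left _ (by norm_num)
        apply mul_le_mul h2 h3 (inv_nonneg.mpr (by linarith)) (by norm_num)
    _ ≤ 7.8e-12 := by norm_num
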